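/- Let α > 0, δ > 0, let n ≥ 1 be an integer, let r₁, ..., r_n be independent random variables each exponentially distributed with rate α, and let d₁, ..., d_n be arbitrary real numbers. Set Y_i = r_i − d_i. Then the probability that there exists an index i such that Y_i ≥ Y_j + δ for all j ≠ i is at least e^{−δα}. Equivalently, the probability that the largest and the second-largest of the values Y₁, ..., Y_n lie within δ of each other is at most 1 − e^{−δα}. -/

import Mathlib

open MeasureTheory ProbabilityTheory
open scoped ENNReal

open Set Real

lemma my_expMeasure_Ici {α : ℝ} (hα : 0 < α) (t : ℝ) :
    expMeasure α (Set.Ici t) = ENNReal.ofReal (Real.exp (-(α * max t 0))) := by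
  have hprob : IsProbabilityMeasure (expMeasure α) := isProbabilityMeasure_expMeasure hα
  have hsing : expMeasure α {t} = 0 := by
    rw [expMeasure, gammaMeasure, withDensity_apply _ (measurableSet_singleton t)]
    exact setLIntegral_measure_zero _ _ (measure_singleton t)
  have hIic : expMeasure α (Set.Iic t) = ENNReal.ofReal (cdf (expMeasure α) t) :=
    (ofReal_cdf _ t).symm
  have hIio : expMeasure α (Set.Iio t) = ENNReal.ofReal (cdf (expMeasure α) t) := by
    have : Set.Iic t = Set.Iio t ∪ {t} := by
      ext x; simp [le_iff_lt_or_eq]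
    rw [this] at hIic
    rw [← hIic]
    apply le_antisymm (measure_mono subset_union_left)
    calc expMeasure α (Set.Iio t ∪ {t}) ≤ expMeasure α (Set.Iio t) + expMeasure α {t} :=
        measure_union_le _ _
      _ = expMeasure α (Set.Iio t) := by rw [hsing, add_zero]
  have hci : Set.Ici t = (Set.Iio t)ᶜ := by ext x; simp
  rw [hci, measure_compl measurableSet_Iio (measure_ne_top _ _), hIio, measure_univ,
    cdf_expMeasure_eq hα]
  rcases le_or_gt 0 t with ht | ht
  · rw [if_pos ht, max_eq_left ht]
    rw [ENNReal.ofReal_sub _ (by positivity), ENNReal.ofReal_one]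
    rw [ENNReal.sub_sub_cancel ENNReal.one_ne_top (by
      simp only [ENNReal.ofReal_le_one]
      exact exp_le_one_iff.mpr (by nlinarith))]
  · rw [if_neg (not_le.mpr ht), max_eq_right ht.le]
    simp

lemma my_expMeasure_shift {α δ : ℝ} (hα : 0 < α) (hδ : 0 ≤ δ) (t : ℝ) :
    ENNReal.ofReal (Real.exp (-δ * α)) * expMeasure α (Set.Ici t)
      ≤ expMeasure α (Set.Ici (t + δ)) := by
  rw [my_expMeasure_Ici hα, my_expMeasure_Ici hα,
    ← ENNReal.ofReal_mul (by positivity), ← Real.exp_add]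
  apply ENNReal.ofReal_le_ofReal
  apply Real.exp_le_exp.mpr
  have h1 : max (t + δ) 0 ≤ max t 0 + δ := by
    rcases le_or_gt 0 t with h | h
    · rw [max_eq_left h, max_eq_left (by linarith)]
    · rw [max_eq_right h.le]; have := le_max_right t 0; linarith [le_max_left (t+δ) (0:ℝ), max_le (by linarith : t+δ ≤ δ) hδ]
  nlinarith [h1]


lemma my_key {Ω : Type*} [MeasurableSpace Ω] (μ : Measure Ω) [IsProbabilityMeasure μ]
    (α δ : ℝ) (hα : 0 < α) (hδ : 0 < δ)
    (n : ℕ) (hn2 : 2 ≤ n)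
    (r : Fin n → Ω → ℝ)
    (hmeas : ∀ i, Measurable (r i))
    (hindep : iIndepFun r μ)
    (hdist : ∀ i, Measure.map (r i) μ = expMeasure α)
    (d : Fin n → ℝ) (i : Fin n) :
    ENNReal.ofReal (Real.exp (-δ * α)) *
      μ {ω | ∀ j : Fin n, j ≠ i → (r j ω - d j) ≤ r i ω - d i} ≤
    μ {ω | ∀ j : Fin n, j ≠ i → (r j ω - d j) + δ ≤ r i ω - d i} := by
  classical
  have hν : IsProbabilityMeasure (expMeasure α) := isProbabilityMeasure_expMeasure hα
  set T := {j : Fin n // j ∈ ({i}ᶜ : Finset (Fin n))} with hT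
  set g : Ω → (T → ℝ) := fun ω j => r j ω with hg'
  have hg : Measurable g := measurable_pi_lambda _ fun j => hmeas j
  set ρ : Measure (T → ℝ) := μ.map g with hρ
  have hρP : IsProbabilityMeasure ρ := Measure.isProbabilityMeasure_map hg.aemeasurable
  -- independence
  have hindep' : IndepFun (r i) g μ := by
    have h0 := hindep.indepFun_finset {i} ({i}ᶜ) (disjoint_compl_right) hmeas
    have := h0.comp (φ := fun v : ({i} : Finset (Fin n)) → ℝ =>
      v ⟨i, Finset.mem_singleton_self i⟩) (ψ := id)
      (_mγ := inferInstance) (measurable_pi_apply _) measurable_id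
    exact this
  have hmap : μ.map (fun ω => (r i ω, g ω)) = (expMeasure α).prod ρ := by
    rw [← hdist i, hρ]
    exact (indepFun_iff_map_prod_eq_prod_map_map (hmeas i).aemeasurable hg.aemeasurable).mp hindep'
  -- nonempty index type
  have hiT : Nonempty T := by
    refine ⟨⟨⟨if (i : ℕ) = 0 then 1 else 0, by split_ifs <;> omega⟩, ?_⟩⟩
    simp only [Finset.mem_compl, Finset.mem_singleton]
    intro h
    apply congrArg Fin.val at h
    simp only at h
    split_ifs at h <;> omega
  have hne : (Finset.univ : Finset T).Nonempty := Finset.univ_nonempty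
  set M : (T → ℝ) → ℝ := fun y => Finset.univ.sup' hne (fun j : T => y j - d j) with hM
  -- the two product-space sets
  set SE : Set (ℝ × (T → ℝ)) := {p | ∀ j : T, p.2 j - d j + δ ≤ p.1 - d i} with hSE
  set SA : Set (ℝ × (T → ℝ)) := {p | ∀ j : T, p.2 j - d j ≤ p.1 - d i} with hSA
  have hmSE : MeasurableSet SE := by
    have : SE = ⋂ j : T, {p : ℝ × (T → ℝ) | p.2 j - d j + δ ≤ p.1 - d i} := by
      ext p; simp [hSE]
    rw [this]
    exact MeasurableSet.iInter fun j => measurableSet_le (by fun_prop) (by fun_prop)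
  have hmSA : MeasurableSet SA := by
    have : SA = ⋂ j : T, {p : ℝ × (T → ℝ) | p.2 j - d j ≤ p.1 - d i} := by
      ext p; simp [hSA]
    rw [this]
    exact MeasurableSet.iInter fun j => measurableSet_le (by fun_prop) (by fun_prop)
  -- identify events as preimages
  have hpre : ∀ ω, ((r i ω, g ω) ∈ SE ↔ ∀ j : Fin n, j ≠ i → (r j ω - d j) + δ ≤ r i ω - d i)
      ∧ ((r i ω, g ω) ∈ SA ↔ ∀ j : Fin n, j ≠ i → (r j ω - d j) ≤ r i ω - d i) := by
    intro ω
    constructor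
    · constructor
      · intro h j hj
        exact h ⟨j, by simpa using hj⟩
      · intro h j
        have hj := j.2
        rw [Finset.mem_compl, Finset.mem_singleton] at hj
        exact h j.1 hj
    · constructor
      · intro h j hj
        exact h ⟨j, by simpa using hj⟩
      · intro h j
        have hj := j.2
        rw [Finset.mem_compl, Finset.mem_singleton] at hj
        exact h j.1 hj
  have hEeq : {ω | ∀ j : Fin n, j ≠ i → (r j ω - d j) + δ ≤ r i ω - d i}
      = (fun ω => (r i ω, g ω)) ⁻¹' SE := by
    ext ω; exact ((hpre ω).1).symm
  have hAeq : {ω | ∀ j : Fin n, j ≠ i → (r j ω - d j) ≤ r i ω - d i}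
      = (fun ω => (r i ω, g ω)) ⁻¹' SA := by
    ext ω; exact ((hpre ω).2).symm
  have hjm : Measurable (fun ω => (r i ω, g ω)) := (hmeas i).prodMk hg
  -- slices
  have hsliceE : ∀ y : T → ℝ, (fun x => (x, y)) ⁻¹' SE = Set.Ici (M y + d i + δ) := by
    intro y
    ext x
    simp only [hSE, Set.mem_preimage, Set.mem_setOf_eq, Set.mem_Ici]
    constructor
    · intro h
      have hs : M y ≤ x - d i - δ :=
        Finset.sup'_le hne _ (fun j _ => by have := h j; linarith)
      simp only [hM] at hs ⊢
      linarith
    · intro h j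
      have := Finset.le_sup' (fun j : T => y j - d ↑j) (Finset.mem_univ j)
      simp only [hM] at h
      linarith
  have hsliceA : ∀ y : T → ℝ, (fun x => (x, y)) ⁻¹' SA = Set.Ici (M y + d i) := by
    intro y
    ext x
    simp only [hSA, Set.mem_preimage, Set.mem_setOf_eq, Set.mem_Ici]
    constructor
    · intro h
      have hs : M y ≤ x - d i :=
        Finset.sup'_le hne _ (fun j _ => by have := h j; linarith)
      simp only [hM] at hs ⊢
      linarith
    · intro h j
      have := Finset.le_sup' (fun j : T => y j - d ↑j) (Finset.mem_univ j)
      simp only [hM] at h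
      linarith
  -- measures via Fubini
  have hmE : μ {ω | ∀ j : Fin n, j ≠ i → (r j ω - d j) + δ ≤ r i ω - d i}
      = ∫⁻ y, expMeasure α (Set.Ici (M y + d i + δ)) ∂ρ := by
    rw [hEeq, ← Measure.map_apply hjm hmSE, hmap, Measure.prod_apply_symm hmSE]
    exact lintegral_congr fun y => by rw [hsliceE y]
  have hmA : μ {ω | ∀ j : Fin n, j ≠ i → (r j ω - d j) ≤ r i ω - d i}
      = ∫⁻ y, expMeasure α (Set.Ici (M y + d i)) ∂ρ := by
    rw [hAeq, ← Measure.map_apply hjm hmSA, hmap, Measure.prod_apply_symm hmSA]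
    exact lintegral_congr fun y => by rw [hsliceA y]
  rw [hmE, hmA, ← lintegral_const_mul' _ _ ENNReal.ofReal_ne_top]
  exact lintegral_mono fun y => by
    have := my_expMeasure_shift hα hδ.le (M y + d i)
    simpa [add_assoc] using this

/-- For independent `Exp(α)` random variables `r₁, …, r_n` and arbitrary
reals `d₁, …, d_n`, setting `Y_i = r_i − d_i`, the probability that some `Y_i` exceeds all
other `Y_j` by at least `δ` is at least `e^{−δα}`. -/
theorem exp_shift_gap_probability
    {Ω : Type*} [MeasurableSpace Ω] (μ : Measure Ω) [IsProbabilityMeasure μ]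
    (α δ : ℝ) (hα : 0 < α) (hδ : 0 < δ)
    (n : ℕ) (hn : 1 ≤ n)
    (r : Fin n → Ω → ℝ)
    (hmeas : ∀ i, Measurable (r i))
    (hindep : iIndepFun r μ)
    (hdist : ∀ i, Measure.map (r i) μ = expMeasure α)
    (d : Fin n → ℝ) :
    ENNReal.ofReal (Real.exp (-δ * α)) ≤
      μ {ω | ∃ i : Fin n, ∀ j : Fin n, j ≠ i →
        (r j ω - d j) + δ ≤ r i ω - d i} := by
  classical
  have hle1 : ENNReal.ofReal (Real.exp (-δ * α)) ≤ 1 := by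
    rw [← ENNReal.ofReal_one]
    exact ENNReal.ofReal_le_ofReal (Real.exp_le_one_iff.mpr (by nlinarith))
  rcases eq_or_lt_of_le hn with hn1 | hn2
  · -- n = 1 : the set is everything
    have : {ω | ∃ i : Fin n, ∀ j : Fin n, j ≠ i →
        (r j ω - d j) + δ ≤ r i ω - d i} = Set.univ := by
      ext ω
      simp only [Set.mem_setOf_eq, Set.mem_univ, iff_true]
      have : Subsingleton (Fin n) := by rw [← hn1]; infer_instance
      refine ⟨⟨0, by omega⟩, fun j hj => absurd (Subsingleton.elim _ _) hj⟩
    rw [this, measure_univ]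
    exact hle1
  · have hn2 : 2 ≤ n := hn2
    set E : Fin n → Set Ω := fun i =>
      ⋂ j, ⋂ (_ : j ≠ i), {ω | (r j ω - d j) + δ ≤ r i ω - d i} with hE
    set A : Fin n → Set Ω := fun i =>
      {ω | ∀ j : Fin n, j ≠ i → (r j ω - d j) ≤ r i ω - d i} with hA
    have hmemE : ∀ i ω, ω ∈ E i ↔ ∀ j : Fin n, j ≠ i → (r j ω - d j) + δ ≤ r i ω - d i := by
      intro i ω; simp [hE]
    have hset : {ω | ∃ i : Fin n, ∀ j : Fin n, j ≠ i →
        (r j ω - d j) + δ ≤ r i ω - d i} = ⋃ i, E i := by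
      ext ω
      simp only [Set.mem_setOf_eq, Set.mem_iUnion]
      exact ⟨fun ⟨i, hi⟩ => ⟨i, (hmemE i ω).mpr hi⟩, fun ⟨i, hi⟩ => ⟨i, (hmemE i ω).mp hi⟩⟩
    have hmE : ∀ i, MeasurableSet (E i) := fun i =>
      MeasurableSet.iInter fun j => MeasurableSet.iInter fun _ =>
        measurableSet_le (by fun_prop) (by fun_prop)
    have hdisj : Pairwise (Function.onFun Disjoint E) := by
      intro i i' hii'
      rw [Function.onFun_apply, Set.disjoint_left]
      intro ω hω hω'
      have h1 := (hmemE i ω).mp hω i' (Ne.symm hii')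
      have h2 := (hmemE i' ω).mp hω' i hii'
      linarith
    have hcover : (⋃ i, A i) = Set.univ := by
      ext ω
      simp only [Set.mem_univ, iff_true, Set.mem_iUnion]
      have : Nonempty (Fin n) := ⟨⟨0, by omega⟩⟩
      obtain ⟨i, -, hi⟩ := Finset.exists_max_image Finset.univ (fun j => r j ω - d j)
        Finset.univ_nonempty
      exact ⟨i, fun j _ => hi j (Finset.mem_univ j)⟩
    have hkey : ∀ i, ENNReal.ofReal (Real.exp (-δ * α)) * μ (A i) ≤ μ (E i) := by
      intro i
      have := my_key μ α δ hα hδ n hn2 r hmeas hindep hdist d i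
      have hEi : E i = {ω | ∀ j : Fin n, j ≠ i → (r j ω - d j) + δ ≤ r i ω - d i} := by
        ext ω; exact hmemE i ω
      rw [hEi]
      exact this
    calc ENNReal.ofReal (Real.exp (-δ * α))
        = ENNReal.ofReal (Real.exp (-δ * α)) * μ Set.univ := by rw [measure_univ, mul_one]
      _ = ENNReal.ofReal (Real.exp (-δ * α)) * μ (⋃ i, A i) := by rw [hcover]
      _ ≤ ENNReal.ofReal (Real.exp (-δ * α)) * ∑ i, μ (A i) := by
          gcongr
          exact measure_iUnion_fintype_le μ A
      _ = ∑ i, ENNReal.ofReal (Real.exp (-δ * α)) * μ (A i) := Finset.mul_sum _ _ _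
      _ ≤ ∑ i, μ (E i) := Finset.sum_le_sum fun i _ => hkey i
      _ = μ (⋃ i, E i) := by rw [measure_iUnion hdisj hmE, tsum_fintype]
      _ = _ := by rw [hset]
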